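/- arXiv:2405.00853 — 2 statements merged into one kernel-verified Lean document; each statement's English description precedes it below -/
import Mathlib

section
/- Let G = (V,E) be a finite simple connected graph, let H be a monophonic halfspace of G, and let {u,v} ∈ E with u ∈ H and v ∉ H. Then H = ⋃_{z ∈ H ∩ △uv} z/v, i.e., a vertex x belongs to H if and only if x lies in the monophonic shadow z/v of some z ∈ H ∩ △uv. -/
open SimpleGraph

variable {V : Type*}

/-- A walk is an induced (chordless) path. -/
def IsInducedPath (G : SimpleGraph V) {x y : V} (p : G.Walk x y) : Prop :=
  p.IsPath ∧ ∀ a b : V, a ∈ p.support → b ∈ p.support → G.Adj a b → s(a, b) ∈ p.edges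

/-- The monophonic interval between `u` and `v`: all vertices on some induced
path between `u` and `v` (empty if `u = v`). -/
def mInterval (G : SimpleGraph V) (u v : V) : Set V :=
  {z | u ≠ v ∧ ∃ p : G.Walk u v, IsInducedPath G p ∧ z ∈ p.support}

/-- Monophonic convexity. -/
def MConvex (G : SimpleGraph V) (C : Set V) : Prop :=
  ∀ x ∈ C, ∀ y ∈ C, mInterval G x y ⊆ C

/-- Monophonic halfspace. -/
def IsMHalfspace (G : SimpleGraph V) (H : Set V) : Prop :=
  MConvex G H ∧ MConvex G Hᶜ

/-- The monophonic shadow `u/v`. -/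
def mShadow (G : SimpleGraph V) (u v : V) : Set V :=
  {z | u ∈ mInterval G z v}

/-- The border `Γ(X)`: vertices of `X` with a neighbour outside `X`. -/
def border (G : SimpleGraph V) (X : Set V) : Set V :=
  {x | x ∈ X ∧ ∃ y, y ∉ X ∧ G.Adj x y}

/-- `△⁻uv = N(u) ∩ N(v)`. -/
def triMinus (G : SimpleGraph V) (u v : V) : Set V :=
  G.neighborSet u ∩ G.neighborSet v

/-- `△uv = (N(u) ∩ N(v)) ∪ {u, v}`. -/
def triangleSet (G : SimpleGraph V) (u v : V) : Set V :=
  (G.neighborSet u ∩ G.neighborSet v) ∪ {u, v}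

/-- `□uv`: vertices appearing in some 4-cycle of `G` having `{u,v}` as an edge. -/
def squareSet (G : SimpleGraph V) (u v : V) : Set V :=
  {x | ∃ a b : V, G.Adj v a ∧ G.Adj a b ∧ G.Adj b u ∧
    a ≠ u ∧ a ≠ v ∧ b ≠ u ∧ b ≠ v ∧ a ≠ b ∧ (x = u ∨ x = v ∨ x = a ∨ x = b)}

/-- `A = □uv \ △⁻uv`. -/
def setA (G : SimpleGraph V) (u v : V) : Set V :=
  squareSet G u v \ triMinus G u v

/-- `Aᵘ = {x ∈ A : d(x,u) < d(x,v)}`. -/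
noncomputable def setAu (G : SimpleGraph V) (u v : V) : Set V :=
  {x ∈ setA G u v | G.dist x u < G.dist x v}

/-- `Aᵛ = A \ Aᵘ`. -/
noncomputable def setAv (G : SimpleGraph V) (u v : V) : Set V :=
  setA G u v \ setAu G u v

/-- The graph obtained from `G` by deleting all edges of the induced subgraph `G[S]`. -/
def delInduced (G : SimpleGraph V) (S : Set V) : SimpleGraph V where
  Adj a b := G.Adj a b ∧ ¬(a ∈ S ∧ b ∈ S)
  symm := by
    constructor
    intro a b h
    exact ⟨h.1.symm, fun hc => h.2 ⟨hc.2, hc.1⟩⟩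
  loopless := ⟨fun a h => G.loopless.irrefl a h.1⟩

/-- The graph `T = G \ E(G[□uv ∪ △⁻uv])`. -/
def graphT (G : SimpleGraph V) (u v : V) : SimpleGraph V :=
  delInduced G (squareSet G u v ∪ triMinus G u v)

/-- The monophonic convex hull of `X`. -/
def mHull (G : SimpleGraph V) (X : Set V) : Set V :=
  ⋂₀ {C | MConvex G C ∧ X ⊆ C}

/-- `S` is an `(a,b)`-separator: every walk from `a` to `b` meets `S`. -/
def IsSeparator (G : SimpleGraph V) (S : Set V) (a b : V) : Prop :=
  ∀ p : G.Walk a b, ∃ s ∈ S, s ∈ p.support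

/-- The cutset `δ(X)` as a set of edges. -/
def cutset (G : SimpleGraph V) (X : Set V) : Set (Sym2 V) :=
  {e | e ∈ G.edgeSet ∧ ∃ a b : V, e = s(a, b) ∧ a ∈ X ∧ b ∉ X}

/-- A family of sets `ℋ` shatters a set `S`. -/
def Shatters (ℋ : Set (Set V)) (S : Set V) : Prop :=
  ∀ T ⊆ S, ∃ H ∈ ℋ, H ∩ S = T

/-- `G` is `S₄` for monophonic convexity: disjoint m-convex sets are
halfspace separable. -/
def IsS4 (G : SimpleGraph V) : Prop :=
  ∀ C₁ C₂ : Set V, MConvex G C₁ → MConvex G C₂ → Disjoint C₁ C₂ →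
    ∃ H : Set V, IsMHalfspace G H ∧ C₁ ⊆ H ∧ C₂ ⊆ Hᶜ

-- edge path is induced
lemma edge_induced (G : SimpleGraph V) {a b : V} (h : G.Adj a b) :
    IsInducedPath G (Walk.cons h Walk.nil) := by
  constructor
  · rw [Walk.cons_isPath_iff]
    exact ⟨Walk.IsPath.nil, by simp [h.ne]⟩
  · intro a' b' ha hb hab
    simp only [Walk.support_cons, Walk.support_nil, List.mem_cons, List.mem_singleton,
      List.not_mem_nil, or_false, Walk.edges_cons, Walk.edges_nil] at ha hb ⊢
    rcases ha with rfl | rfl <;> rcases hb with rfl | rfl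
    · exact absurd hab (G.loopless.irrefl _)
    · rfl
    · exact Sym2.eq_swap
    · exact absurd hab (G.loopless.irrefl _)

lemma isInducedPath_cons2 (G : SimpleGraph V) {u v z : V} (h1 : G.Adj u v) (h2 : G.Adj v z)
    (h3 : ¬G.Adj u z) (hne : u ≠ z) :
    IsInducedPath G (Walk.cons h1 (Walk.cons h2 Walk.nil)) := by
  constructor
  · rw [Walk.cons_isPath_iff, Walk.cons_isPath_iff]
    refine ⟨⟨Walk.IsPath.nil, by simp [h2.ne]⟩, by simp [h1.ne, hne]⟩
  · intro a b ha hb hab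
    simp only [Walk.support_cons, Walk.support_nil, List.mem_cons, List.mem_singleton,
      List.not_mem_nil, or_false, Walk.edges_cons, Walk.edges_nil] at ha hb ⊢
    rcases ha with rfl | rfl | rfl <;> rcases hb with rfl | rfl | rfl
    · exact absurd hab (G.loopless.irrefl _)
    · exact Or.inl rfl
    · exact absurd hab h3
    · exact Or.inl Sym2.eq_swap
    · exact absurd hab (G.loopless.irrefl _)
    · exact Or.inr rfl
    · exact absurd hab (fun hc => h3 hab.symm)
    · exact Or.inr Sym2.eq_swap
    · exact absurd hab (G.loopless.irrefl _)

lemma inducedPath_tail {G : SimpleGraph V} {x w y : V} {h : G.Adj x w}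
    {p : G.Walk w y} (hp : IsInducedPath G (Walk.cons h p)) : IsInducedPath G p := by
  obtain ⟨hpath, hind⟩ := hp
  rw [Walk.cons_isPath_iff] at hpath
  refine ⟨hpath.1, fun a b ha hb hab => ?_⟩
  have hmem := hind a b (by simp [ha]) (by simp [hb]) hab
  rw [Walk.edges_cons, List.mem_cons] at hmem
  rcases hmem with h' | h'
  · exfalso
    rw [Sym2.eq_iff] at h'
    rcases h' with ⟨rfl, rfl⟩ | ⟨rfl, rfl⟩
    · exact hpath.2 ha
    · exact hpath.2 hb
  · exact h'

-- chord gives a shorter walk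
lemma exists_shorter {G : SimpleGraph V} [DecidableEq V] {x y : V} (p : G.Walk x y) :
    ∀ a b : V, a ∈ p.support → b ∈ p.support → G.Adj a b → s(a, b) ∉ p.edges →
      ∃ q : G.Walk x y, q.length < p.length := by
  induction p with
  | nil =>
    intro a b ha hb hab _
    simp only [Walk.support_nil, List.mem_singleton] at ha hb
    subst ha; subst hb
    exact absurd hab (G.loopless.irrefl _)
  | @cons x w y h p ih =>
    intro a b ha hb hab hne
    simp only [Walk.support_cons, List.mem_cons] at ha hb
    have hne' : s(a, b) ∉ p.edges := fun hc => hne (by rw [Walk.edges_cons]; exact List.mem_cons_of_mem _ hc)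
    have hfirst : s(x, w) ∈ (Walk.cons h p).edges := by rw [Walk.edges_cons]; exact List.mem_cons_self
    rcases ha with rfl | ha
    · rcases hb with rfl | hb
      · exact absurd hab (G.loopless.irrefl _)
      · have hbw : b ≠ w := by rintro rfl; exact hne hfirst
        refine ⟨Walk.cons hab (p.dropUntil b hb), ?_⟩
        have hsplit : (p.takeUntil b hb).length + (p.dropUntil b hb).length = p.length := by
          conv_rhs => rw [← p.take_spec hb]
          rw [Walk.length_append]
        have htk : 0 < (p.takeUntil b hb).length := by
          rcases Nat.eq_zero_or_pos (p.takeUntil b hb).length with h0 | h0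
          · exact absurd (Walk.eq_of_length_eq_zero h0).symm hbw
          · exact h0
        rw [Walk.length_cons, Walk.length_cons]
        omega
    · rcases hb with rfl | hb
      · have haw : a ≠ w := by
          rintro rfl
          exact hne (by rw [Sym2.eq_swap]; exact hfirst)
        refine ⟨Walk.cons hab.symm (p.dropUntil a ha), ?_⟩
        have hsplit : (p.takeUntil a ha).length + (p.dropUntil a ha).length = p.length := by
          conv_rhs => rw [← p.take_spec ha]
          rw [Walk.length_append]
        have htk : 0 < (p.takeUntil a ha).length := by
          rcases Nat.eq_zero_or_pos (p.takeUntil a ha).length with h0 | h0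
          · exact absurd (Walk.eq_of_length_eq_zero h0).symm haw
          · exact h0
        rw [Walk.length_cons, Walk.length_cons]
        omega
      · obtain ⟨q, hq⟩ := ih a b ha hb hab hne'
        exact ⟨Walk.cons h q, by rw [Walk.length_cons, Walk.length_cons]; omega⟩

lemma exists_induced {G : SimpleGraph V} (hG : G.Connected) (x y : V) :
    ∃ p : G.Walk x y, IsInducedPath G p := by
  classical
  obtain ⟨p, hp, hl⟩ := hG.exists_path_of_dist x y
  refine ⟨p, hp, fun a b ha hb hab => ?_⟩
  by_contra hne
  obtain ⟨q, hq⟩ := exists_shorter p a b ha hb hab hne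
  have := SimpleGraph.dist_le q
  omega

-- key lemma: walking along an induced path inside H from x to y (with y ~ v),
-- we find z ∈ H on an induced x–v path with z = y or z adjacent to both y and v.
lemma key_lemma {G : SimpleGraph V} {H : Set V} (hH : MConvex G H) {v : V} (hv : v ∉ H) :
    ∀ {x y : V} (p : G.Walk x y), G.Adj y v → IsInducedPath G p →
      (∀ w ∈ p.support, w ∈ H) →
      ∃ (z : V) (q : G.Walk x v), z ∈ H ∧ (z = y ∨ (G.Adj z y ∧ G.Adj z v)) ∧
        IsInducedPath G q ∧ z ∈ q.support ∧ ∀ w ∈ q.support, w ∈ p.support ∨ w = v := by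
  intro x y p
  induction p with
  | nil =>
    intro hyv _ hsupp
    refine ⟨_, Walk.cons hyv Walk.nil, hsupp _ (by simp), Or.inl rfl,
      edge_induced G hyv, by simp, ?_⟩
    intro w hw
    simp only [Walk.support_cons, Walk.support_nil, List.mem_cons, List.mem_singleton,
      List.not_mem_nil, or_false] at hw ⊢
    tauto
  | @cons x w y h p ih =>
    intro hyv hp hsupp
    have hxH : x ∈ H := hsupp x (by simp)
    have hyH : y ∈ H := hsupp y (Walk.end_mem_support _)
    by_cases hxv : G.Adj x v
    · refine ⟨x, Walk.cons hxv Walk.nil, hxH, ?_, edge_induced G hxv, by simp, ?_⟩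
      · by_cases hxy : x = y
        · exact Or.inl hxy
        · refine Or.inr ⟨?_, hxv⟩
          by_contra hne
          have hym : ¬G.Adj y x := fun hc => hne hc.symm
          have hpind := isInducedPath_cons2 G hyv hxv.symm hym (Ne.symm hxy)
          exact hv (hH y hyH x hxH ⟨Ne.symm hxy, _, hpind, by simp⟩)
      · intro w' hw'
        simp only [Walk.support_cons, Walk.support_nil, List.mem_cons, List.mem_singleton,
          List.not_mem_nil, or_false] at hw' ⊢
        tauto
    · have hp' := inducedPath_tail hp
      have hsupp' : ∀ w' ∈ p.support, w' ∈ H := fun w' hw' => hsupp w' (by simp [hw'])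
      obtain ⟨z, q, hzH, htri, hqind, hzq, hqsub⟩ := ih hyv hp' hsupp'
      have hxp : x ∉ p.support := ((Walk.cons_isPath_iff _ _).mp hp.1).2
      have hxnv : x ≠ v := fun hc => hv (hc ▸ hxH)
      have hxq : x ∉ q.support := fun hc => by
        rcases hqsub x hc with h' | h'
        · exact hxp h'
        · exact hxnv h'
      refine ⟨z, Walk.cons h q, hzH, htri, ⟨?_, ?_⟩, by simp [hzq], ?_⟩
      · rw [Walk.cons_isPath_iff]; exact ⟨hqind.1, hxq⟩
      · intro a b ha hb hab
        rw [Walk.support_cons, List.mem_cons] at ha hb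
        rw [Walk.edges_cons, List.mem_cons]
        rcases ha with rfl | ha
        · rcases hb with rfl | hb
          · exact absurd hab (G.loopless.irrefl _)
          · rcases hqsub b hb with hbp | rfl
            · have hmem := hp.2 a b (by simp) (by simp [hbp]) hab
              rw [Walk.edges_cons, List.mem_cons] at hmem
              rcases hmem with heq | hmem
              · exact Or.inl heq
              · exact absurd (Walk.fst_mem_support_of_mem_edges p hmem) hxp
            · exact absurd hab hxv
        · rcases hb with rfl | hb
          · rcases hqsub a ha with hap | rfl
            · have hmem := hp.2 a b (by simp [hap]) (by simp) hab
              rw [Walk.edges_cons, List.mem_cons] at hmem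
              rcases hmem with heq | hmem
              · exact Or.inl heq
              · exact absurd (Walk.snd_mem_support_of_mem_edges p hmem) hxp
            · exact absurd hab.symm hxv
          · exact Or.inr (hqind.2 a b ha hb hab)
      · intro w' hw'
        rw [Walk.support_cons, List.mem_cons] at hw'
        rcases hw' with rfl | hw'
        · exact Or.inl (by simp)
        · rcases hqsub w' hw' with h' | h'
          · exact Or.inl (by simp [h'])
          · exact Or.inr h'


/-- `H = ⋃_{z ∈ H ∩ △uv} z/v`. -/
theorem mhalfspace_eq_iUnion_shadows [Fintype V] (G : SimpleGraph V)
    (hG : G.Connected) (H : Set V) (hH : IsMHalfspace G H)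
    (u v : V) (huv : G.Adj u v) (hu : u ∈ H) (hv : v ∉ H) :
    H = ⋃ z ∈ H ∩ triangleSet G u v, mShadow G z v := by
  ext x
  simp only [Set.mem_iUnion, Set.mem_inter_iff, exists_prop]
  constructor
  · intro hx
    have hmain : ∃ (z : V) (q : G.Walk x v), z ∈ H ∧
        (z = u ∨ (G.Adj z u ∧ G.Adj z v)) ∧ IsInducedPath G q ∧ z ∈ q.support := by
      by_cases hxu : x = u
      · subst hxu
        obtain ⟨z, q, h1, h2, h3, h4, _⟩ :=
          key_lemma hH.1 hv (Walk.nil : G.Walk x x) huv ⟨Walk.IsPath.nil, by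
            intro a b ha hb hab
            simp only [Walk.support_nil, List.mem_singleton] at ha hb
            subst ha; subst hb; exact absurd hab (G.loopless.irrefl _)⟩ (by simpa using hx)
        exact ⟨z, q, h1, h2, h3, h4⟩
      · obtain ⟨p, hpind⟩ := exists_induced hG x u
        have hsupp : ∀ w ∈ p.support, w ∈ H := fun w hw =>
          hH.1 x hx u hu ⟨hxu, p, hpind, hw⟩
        obtain ⟨z, q, h1, h2, h3, h4, _⟩ := key_lemma hH.1 hv p huv hpind hsupp
        exact ⟨z, q, h1, h2, h3, h4⟩
    obtain ⟨z, q, hzH, htri, hqind, hzq⟩ := hmain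
    refine ⟨z, ⟨hzH, ?_⟩, ?_⟩
    · rcases htri with rfl | ⟨h1, h2⟩
      · exact Or.inr (Or.inl rfl)
      · exact Or.inl ⟨h1.symm, h2.symm⟩
    · exact ⟨fun hc => hv (hc ▸ hx), q, hqind, hzq⟩
  · rintro ⟨z, ⟨hzH, _⟩, hxz⟩
    by_contra hxH
    exact (hH.2 x hxH v hv hxz) hzH
end

section
/- Let G = (V,E) be a finite simple connected graph, let H be a monophonic halfspace of G, and let {u,v} ∈ E with u ∈ H and v ∉ H. Then Aᵘ ⊆ H and Aᵛ ⊆ V∖H. -/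
open SimpleGraph

variable {V : Type*}

lemma mem_mInterval_mid (G : SimpleGraph V) {x y z : V} (hxy : G.Adj x y) (hyz : G.Adj y z)
    (hxz : ¬ G.Adj x z) (hne : x ≠ z) : y ∈ mInterval G x z := by
  refine ⟨hne, Walk.cons hxy (Walk.cons hyz Walk.nil), ⟨?_, ?_⟩, by simp⟩
  · simp [Walk.isPath_def, hxy.ne, hyz.ne, hne]
  · intro a b ha hb hab
    simp only [Walk.support_cons, Walk.support_nil, List.mem_cons, List.mem_singleton] at ha hb
    simp only [Walk.edges_cons, Walk.edges_nil, List.mem_cons, List.not_mem_nil, or_false]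
    rcases ha with rfl|rfl|rfl|h <;> rcases hb with rfl|rfl|rfl|h' <;>
      first
        | exact absurd hab (G.irrefl)
        | exact absurd hab hxz
        | exact absurd hab.symm hxz
        | exact absurd h (by simp)
        | exact absurd h' (by simp)
        | simp [Sym2.eq_swap]

/-- `Aᵘ ⊆ H` and `Aᵛ ⊆ V∖H`. -/
theorem setAu_subset_and_setAv_subset [Fintype V] (G : SimpleGraph V)
    (hG : G.Connected) (H : Set V) (hH : IsMHalfspace G H)
    (u v : V) (huv : G.Adj u v) (hu : u ∈ H) (hv : v ∉ H) :
    setAu G u v ⊆ H ∧ setAv G u v ⊆ Hᶜ := by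
  obtain ⟨hHc, hHcc⟩ := hH
  have key1 : ∀ b, G.Adj u b → ¬ G.Adj v b → b ≠ v → b ∈ H := by
    intro b hub hvb hbv
    by_contra hbH
    exact (hHcc v hv b hbH (mem_mInterval_mid G huv.symm hub hvb hbv.symm)) hu
  have key2 : ∀ a, G.Adj v a → ¬ G.Adj u a → a ≠ u → a ∉ H := by
    intro a hva hua hau haH
    exact hv (hHc u hu a haH (mem_mInterval_mid G huv hva hua (Ne.symm hau)))
  constructor
  · rintro x ⟨⟨⟨a, b, hva, hab, hbu, hau, hav, hbu', hbv, hanb, hx⟩, hxtri⟩, hdist⟩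
    rcases hx with rfl|rfl|rfl|rfl
    · exact hu
    · exfalso
      have h0 : G.dist x x = 0 := dist_self
      omega
    · exfalso
      have h1 : G.dist x v = 1 := dist_eq_one_iff_adj.mpr hva.symm
      have h0 : G.dist x u = 0 := by omega
      exact hau (hG.dist_eq_zero_iff.mp h0)
    · have hvb : ¬ G.Adj v x := fun h => hxtri ⟨hbu.symm, h⟩
      exact key1 x hbu.symm hvb hbv
  · rintro x ⟨⟨⟨a, b, hva, hab, hbu, hau, hav, hbu', hbv, hanb, hx⟩, hxtri⟩, hnAu⟩
    have hxA : x ∈ setA G u v := ⟨⟨a, b, hva, hab, hbu, hau, hav, hbu', hbv, hanb, hx⟩, hxtri⟩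
    have hdist : ¬ G.dist x u < G.dist x v := fun h => hnAu ⟨hxA, h⟩
    rcases hx with rfl|rfl|rfl|rfl
    · exfalso
      have h0 : G.dist x x = 0 := dist_self
      have h1 : G.dist x v = 1 := dist_eq_one_iff_adj.mpr huv
      omega
    · exact hv
    · have hua : ¬ G.Adj u x := fun h => hxtri ⟨h, hva⟩
      exact key2 x hva hua hau
    · exfalso
      have h1 : G.dist x u = 1 := dist_eq_one_iff_adj.mpr hbu
      have h2 : G.dist x v ≤ 1 := by omega
      have h3 : G.dist x v ≠ 0 := fun h => hbv (hG.dist_eq_zero_iff.mp h)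
      have h4 : G.dist x v = 1 := by omega
      exact hxtri ⟨hbu.symm, (dist_eq_one_iff_adj.mp h4).symm⟩
end
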